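/- Let μ* be a Borel probability measure on ℝ^q satisfying both: (i) the ball measure condition μ*(B(x,r)) ≤ C₂ r^α for all x, r > 0, and (ii) the density condition μ*(B(x,r)) ≥ C₁ r^α for all x ∈ supp(μ*) and 0 < r ≤ r₀. Suppose a nonnegative kernel K_n satisfies the decay bound K_n(x,y) ≤ κ₄ n^{2q}/max(1,(n|x−y|_∞)^S) with S > α, and the near-diagonal lower bound K_n(x,y) ≥ (κ₁/2)n^{2q} whenever |x−y|_∞ ≤ κ₃/n. Then there exist constants c, C > 0 (depending only on q, α, S, C₁, C₂, κ₁, κ₃, κ₄, r₀) such that for all sufficiently large n: c n^{2q−α} ≤ inf_{x ∈ supp(μ*)} ∫ K_n(x,y) dμ*(y) ≤ sup_{x ∈ ℝ^q} ∫ K_n(x,y) dμ*(y) ≤ C n^{2q−α}. -/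

import Mathlib

open MeasureTheory Metric

/-- The support of a measure: points all of whose closed balls have positive measure. -/
def msupport {X : Type*} [MeasurableSpace X] [PseudoMetricSpace X] (μ : Measure X) : Set X :=
  {x | ∀ r : ℝ, 0 < r → 0 < μ (Metric.closedBall x r)}

/-- two-sided bounds on the kernel integral, of order n^{2q-α}. -/
theorem stmt1 (q : ℕ) (hq : 1 ≤ q)
    (μ : Measure (Fin q → ℝ)) [IsProbabilityMeasure μ]
    (C₁ C₂ α r₀ : ℝ) (hC₁ : 0 < C₁) (hC₂ : 0 < C₂) (hα : 0 ≤ α) (hr₀ : 0 < r₀)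
    (hball : ∀ (x : Fin q → ℝ) (r : ℝ), 0 < r →
      μ (Metric.closedBall x r) ≤ ENNReal.ofReal (C₂ * r ^ α))
    (hdens : ∀ x ∈ msupport μ, ∀ r : ℝ, 0 < r → r ≤ r₀ →
      ENNReal.ofReal (C₁ * r ^ α) ≤ μ (Metric.closedBall x r))
    (K : ℕ → (Fin q → ℝ) → (Fin q → ℝ) → ℝ)
    (S κ₁ κ₃ κ₄ : ℝ) (hS : α < S) (hκ₁ : 0 < κ₁) (hκ₃ : 0 < κ₃) (hκ₄ : 0 < κ₄)
    (hKnonneg : ∀ n x y, 0 ≤ K n x y)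
    (hKm : ∀ n x, Measurable (K n x))
    (hdecay : ∀ (n : ℕ), 1 ≤ n → ∀ x y,
      K n x y ≤ κ₄ * (n : ℝ) ^ (2 * (q : ℝ)) / max 1 (((n : ℝ) * dist x y) ^ S))
    (hneardiag : ∀ (n : ℕ), 1 ≤ n → ∀ x y, dist x y ≤ κ₃ / n →
      (κ₁ / 2) * (n : ℝ) ^ (2 * (q : ℝ)) ≤ K n x y) :
    ∃ c C : ℝ, 0 < c ∧ 0 < C ∧ ∃ N : ℕ, ∀ n : ℕ, N ≤ n →
      (∀ x ∈ msupport μ, c * (n : ℝ) ^ (2 * (q : ℝ) - α) ≤ ∫ y, K n x y ∂μ) ∧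
      (∀ x : Fin q → ℝ, ∫ y, K n x y ∂μ ≤ C * (n : ℝ) ^ (2 * (q : ℝ) - α)) := by
  have hS0 : 0 ≤ S := hα.trans hS.le
  set ρ : ℝ := (2:ℝ) ^ (α - S) with hρdef
  have hρ0 : 0 < ρ := Real.rpow_pos_of_pos two_pos _
  have hρ1 : ρ < 1 := Real.rpow_lt_one_of_one_lt_of_neg one_lt_two (by linarith)
  have h1ρ : 0 < (1 - ρ)⁻¹ := inv_pos.mpr (by linarith)
  refine ⟨(κ₁/2) * (C₁ * κ₃ ^ α), κ₄ * C₂ * (1 + (2:ℝ) ^ α * (1 - ρ)⁻¹), by positivity,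
    by positivity, max 1 ⌈κ₃ / r₀⌉₊, fun n hn => ?_⟩
  have hn1 : 1 ≤ n := le_trans (le_max_left _ _) hn
  have hn0 : (0:ℝ) < n := by exact_mod_cast hn1
  have hrn : κ₃ / n ≤ r₀ := by
    rw [div_le_iff₀ hn0]
    have h1 : (⌈κ₃ / r₀⌉₊ : ℝ) ≤ n := by exact_mod_cast le_trans (le_max_right _ _) hn
    have h2 : κ₃ / r₀ ≤ (n:ℝ) := (Nat.le_ceil _).trans h1
    calc κ₃ = (κ₃ / r₀) * r₀ := by field_simp
    _ ≤ (n:ℝ) * r₀ := by nlinarith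
    _ = r₀ * n := by ring
  have hKb : ∀ x y, K n x y ≤ κ₄ * (n:ℝ) ^ (2*(q:ℝ)) := fun x y =>
    (hdecay n hn1 x y).trans (div_le_self (by positivity) (le_max_left _ _))
  have hKint : ∀ x, Integrable (K n x) μ := fun x =>
    (integrable_const (κ₄ * (n:ℝ) ^ (2*(q:ℝ)))).mono (hKm n x).aestronglyMeasurable
      (Filter.Eventually.of_forall fun y => by
        rw [Real.norm_eq_abs, Real.norm_eq_abs, abs_of_nonneg (hKnonneg n x y)]
        exact (hKb x y).trans (le_abs_self _))
  constructor
  · -- lower bound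
    intro x hx
    set r : ℝ := κ₃ / n with hrdef
    have hr0 : 0 < r := div_pos hκ₃ hn0
    have htr : C₁ * r ^ α ≤ (μ (closedBall x r)).toReal :=
      (ENNReal.ofReal_le_iff_le_toReal (measure_ne_top μ _)).mp (hdens x hx r hr0 hrn)
    have h1 : ∫ y in closedBall x r, K n x y ∂μ ≤ ∫ y, K n x y ∂μ :=
      setIntegral_le_integral (hKint x) (Filter.Eventually.of_forall (hKnonneg n x))
    have h2 : ∫ y in closedBall x r, (κ₁/2) * (n:ℝ) ^ (2*(q:ℝ)) ∂μ
        ≤ ∫ y in closedBall x r, K n x y ∂μ := by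
      refine setIntegral_mono_on ((integrableOn_const_iff).mpr (Or.inr (measure_lt_top _ _)))
        ((hKint x).integrableOn) measurableSet_closedBall ?_
      intro y hy
      exact hneardiag n hn1 x y (by rw [dist_comm]; exact mem_closedBall.mp hy)
    rw [setIntegral_const, smul_eq_mul, measureReal_def] at h2
    have key : (κ₁/2) * (C₁ * κ₃ ^ α) * (n:ℝ) ^ (2*(q:ℝ) - α)
        ≤ (μ (closedBall x r)).toReal * ((κ₁/2) * (n:ℝ) ^ (2*(q:ℝ))) := by
      have hra : r ^ α = κ₃ ^ α / (n:ℝ) ^ α := Real.div_rpow hκ₃.le hn0.le α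
      have hnn : (n:ℝ) ^ (2*(q:ℝ) - α) = (n:ℝ) ^ (2*(q:ℝ)) / (n:ℝ) ^ α :=
        Real.rpow_sub hn0 _ _
      have h3 : (κ₁/2) * (C₁ * κ₃ ^ α) * ((n:ℝ) ^ (2*(q:ℝ)) / (n:ℝ) ^ α)
          = (C₁ * (κ₃ ^ α / (n:ℝ) ^ α)) * ((κ₁/2) * (n:ℝ) ^ (2*(q:ℝ))) := by ring
      rw [hnn, h3, ← hra]
      exact mul_le_mul_of_nonneg_right htr (by positivity)
    linarith
  · -- upper bound
    intro x
    have hfeq : ∫ y, K n x y ∂μ = (∫⁻ y, ENNReal.ofReal (K n x y) ∂μ).toReal :=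
      integral_eq_lintegral_of_nonneg_ae (Filter.Eventually.of_forall (hKnonneg n x))
        (hKm n x).aestronglyMeasurable
    rw [hfeq]
    refine ENNReal.toReal_le_of_le_ofReal (by positivity) ?_
    set f : (Fin q → ℝ) → ENNReal := fun y => ENNReal.ofReal (K n x y) with hfdef
    set s0 : Set (Fin q → ℝ) := closedBall x (1/(n:ℝ)) with hs0def
    set A : ℕ → Set (Fin q → ℝ) :=
      fun j => closedBall x ((2:ℝ)^(j+1)/(n:ℝ)) \ closedBall x ((2:ℝ)^j/(n:ℝ)) with hAdef
    have hcover : (Set.univ : Set (Fin q → ℝ)) ⊆ s0 ∪ ⋃ j, A j := by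
      intro y _
      by_cases hy : dist y x ≤ 1/(n:ℝ)
      · exact Or.inl hy
      · push_neg at hy
        have ht1 : 1 < (n:ℝ) * dist y x := by
          rw [div_lt_iff₀ hn0] at hy; linarith [hy]
        have hex : ∃ k : ℕ, (n:ℝ) * dist y x ≤ 2^k := by
          obtain ⟨k, hk⟩ := pow_unbounded_of_one_lt ((n:ℝ) * dist y x) one_lt_two
          exact ⟨k, hk.le⟩
        classical
        set k := Nat.find hex with hkdef
        have hk : (n:ℝ) * dist y x ≤ 2^k := Nat.find_spec hex
        have hkpos : k ≠ 0 := by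
          intro h0
          rw [h0] at hk; simp at hk; linarith
        obtain ⟨j, hj⟩ := Nat.exists_eq_succ_of_ne_zero hkpos
        right
        refine Set.mem_iUnion.mpr ⟨j, ?_, ?_⟩
        · rw [mem_closedBall, le_div_iff₀ hn0]
          rw [hj] at hk; calc dist y x * n = (n:ℝ) * dist y x := by ring
          _ ≤ 2^(j+1) := hk
        · rw [mem_closedBall, not_le, div_lt_iff₀ hn0]
          have := Nat.find_min hex (by omega : j < k)
          push_neg at this
          calc (2:ℝ)^j < (n:ℝ) * dist y x := this
          _ = dist y x * n := by ring
    have hsplit : ∫⁻ y, f y ∂μ ≤ (∫⁻ y in s0, f y ∂μ) + ∑' j, ∫⁻ y in A j, f y ∂μ := by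
      calc ∫⁻ y, f y ∂μ = ∫⁻ y in Set.univ, f y ∂μ := (setLIntegral_univ _).symm
      _ ≤ ∫⁻ y in s0 ∪ ⋃ j, A j, f y ∂μ := lintegral_mono_set hcover
      _ ≤ (∫⁻ y in s0, f y ∂μ) + ∫⁻ y in ⋃ j, A j, f y ∂μ := lintegral_union_le _ _ _
      _ ≤ _ := add_le_add_right (lintegral_iUnion_le _ _) _
    have hs0b : ∫⁻ y in s0, f y ∂μ ≤ ENNReal.ofReal (κ₄ * C₂ * (n:ℝ) ^ (2*(q:ℝ) - α)) := by
      calc ∫⁻ y in s0, f y ∂μ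
          ≤ ∫⁻ _ in s0, ENNReal.ofReal (κ₄ * (n:ℝ) ^ (2*(q:ℝ))) ∂μ :=
            setLIntegral_mono measurable_const (fun y _ => ENNReal.ofReal_le_ofReal (hKb x y))
      _ = ENNReal.ofReal (κ₄ * (n:ℝ) ^ (2*(q:ℝ))) * μ s0 := setLIntegral_const _ _
      _ ≤ ENNReal.ofReal (κ₄ * (n:ℝ) ^ (2*(q:ℝ))) * ENNReal.ofReal (C₂ * (1/(n:ℝ)) ^ α) :=
            mul_le_mul_right (hball x _ (by positivity)) _
      _ = ENNReal.ofReal (κ₄ * (n:ℝ) ^ (2*(q:ℝ)) * (C₂ * (1/(n:ℝ)) ^ α)) :=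
            (ENNReal.ofReal_mul (by positivity)).symm
      _ = _ := by
            congr 1
            rw [Real.rpow_sub hn0, Real.div_rpow zero_le_one hn0.le, Real.one_rpow]
            field_simp
    have hAb : ∀ j : ℕ, ∫⁻ y in A j, f y ∂μ
        ≤ ENNReal.ofReal ((κ₄ * C₂ * (2:ℝ)^α * (n:ℝ) ^ (2*(q:ℝ) - α)) * ρ^j) := by
      intro j
      have h2jS : (0:ℝ) < ((2:ℝ)^j) ^ S := Real.rpow_pos_of_pos (by positivity) S
      have hKA : ∀ y ∈ A j, K n x y ≤ κ₄ * (n:ℝ) ^ (2*(q:ℝ)) / ((2:ℝ)^j) ^ S := by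
        intro y hy
        obtain ⟨-, hy2⟩ := hy
        have hd : (2:ℝ)^j / n < dist y x := by
          simpa [mem_closedBall, not_le] using hy2
        have hd2 : (2:ℝ)^j ≤ (n:ℝ) * dist x y := by
          rw [dist_comm, ← div_le_iff₀' hn0]; exact hd.le
        refine (hdecay n hn1 x y).trans ?_
        refine div_le_div_of_nonneg_left (by positivity) h2jS ?_
        exact le_max_of_le_right (Real.rpow_le_rpow (by positivity) hd2 hS0)
      calc ∫⁻ y in A j, f y ∂μ
          ≤ ∫⁻ _ in A j, ENNReal.ofReal (κ₄ * (n:ℝ) ^ (2*(q:ℝ)) / ((2:ℝ)^j) ^ S) ∂μ :=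
            setLIntegral_mono measurable_const (fun y hy => ENNReal.ofReal_le_ofReal (hKA y hy))
      _ = ENNReal.ofReal (κ₄ * (n:ℝ) ^ (2*(q:ℝ)) / ((2:ℝ)^j) ^ S) * μ (A j) :=
            setLIntegral_const _ _
      _ ≤ ENNReal.ofReal (κ₄ * (n:ℝ) ^ (2*(q:ℝ)) / ((2:ℝ)^j) ^ S)
            * μ (closedBall x ((2:ℝ)^(j+1)/(n:ℝ))) :=
            mul_le_mul_right (measure_mono Set.diff_subset) _
      _ ≤ ENNReal.ofReal (κ₄ * (n:ℝ) ^ (2*(q:ℝ)) / ((2:ℝ)^j) ^ S)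
            * ENNReal.ofReal (C₂ * ((2:ℝ)^(j+1)/(n:ℝ)) ^ α) :=
            mul_le_mul_right (hball x _ (by positivity)) _
      _ = ENNReal.ofReal (κ₄ * (n:ℝ) ^ (2*(q:ℝ)) / ((2:ℝ)^j) ^ S
            * (C₂ * ((2:ℝ)^(j+1)/(n:ℝ)) ^ α)) := (ENNReal.ofReal_mul (by positivity)).symm
      _ = _ := by
            congr 1
            have e1 : ((2:ℝ)^j) ^ S = (2:ℝ) ^ ((j:ℝ) * S) := by
              rw [← Real.rpow_natCast 2 j, ← Real.rpow_mul (by norm_num)]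
            have e2 : ((2:ℝ)^(j+1)) ^ α = (2:ℝ) ^ ((j:ℝ) * α) * (2:ℝ) ^ α := by
              rw [← Real.rpow_natCast 2 (j+1), ← Real.rpow_mul (by norm_num)]
              push_cast
              rw [show ((j:ℝ) + 1) * α = (j:ℝ) * α + α by ring, Real.rpow_add two_pos]
            have e3 : ρ ^ j = (2:ℝ) ^ ((j:ℝ) * α) / (2:ℝ) ^ ((j:ℝ) * S) := by
              rw [hρdef, ← Real.rpow_natCast ((2:ℝ) ^ (α - S)) j, ← Real.rpow_mul (by norm_num),
                show (α - S) * (j:ℝ) = (j:ℝ) * α - (j:ℝ) * S by ring, Real.rpow_sub two_pos]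
            have e4 : (n:ℝ) ^ (2*(q:ℝ) - α) = (n:ℝ) ^ (2*(q:ℝ)) / (n:ℝ) ^ α :=
              Real.rpow_sub hn0 _ _
            rw [Real.div_rpow (by positivity) hn0.le, e1, e2, e3, e4]
            have p1 : (0:ℝ) < (2:ℝ) ^ ((j:ℝ) * S) := Real.rpow_pos_of_pos two_pos _
            have p2 : (0:ℝ) < (n:ℝ) ^ α := Real.rpow_pos_of_pos hn0 _
            field_simp
    have hsum : ∑' j, ∫⁻ y in A j, f y ∂μ
        ≤ ENNReal.ofReal (κ₄ * C₂ * (2:ℝ)^α * (n:ℝ) ^ (2*(q:ℝ) - α) * (1 - ρ)⁻¹) := by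
      have hD : (0:ℝ) < κ₄ * C₂ * (2:ℝ)^α * (n:ℝ) ^ (2*(q:ℝ) - α) := by positivity
      calc ∑' j, ∫⁻ y in A j, f y ∂μ
          ≤ ∑' j : ℕ, ENNReal.ofReal ((κ₄ * C₂ * (2:ℝ)^α * (n:ℝ) ^ (2*(q:ℝ) - α)) * ρ^j) :=
            ENNReal.tsum_le_tsum hAb
      _ = ENNReal.ofReal (κ₄ * C₂ * (2:ℝ)^α * (n:ℝ) ^ (2*(q:ℝ) - α))
            * ∑' j : ℕ, (ENNReal.ofReal ρ)^j := by
            simp_rw [ENNReal.ofReal_mul hD.le, ENNReal.ofReal_pow hρ0.le,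
              ENNReal.tsum_mul_left]
      _ = ENNReal.ofReal (κ₄ * C₂ * (2:ℝ)^α * (n:ℝ) ^ (2*(q:ℝ) - α))
            * (1 - ENNReal.ofReal ρ)⁻¹ := by rw [ENNReal.tsum_geometric]
      _ = _ := by
            rw [← ENNReal.ofReal_one, ← ENNReal.ofReal_sub _ hρ0.le,
              ← ENNReal.ofReal_inv_of_pos (by linarith), ← ENNReal.ofReal_mul hD.le]
    calc ∫⁻ y, f y ∂μ ≤ _ := hsplit
    _ ≤ ENNReal.ofReal (κ₄ * C₂ * (n:ℝ) ^ (2*(q:ℝ) - α))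
          + ENNReal.ofReal (κ₄ * C₂ * (2:ℝ)^α * (n:ℝ) ^ (2*(q:ℝ) - α) * (1 - ρ)⁻¹) :=
          add_le_add hs0b hsum
    _ = ENNReal.ofReal (κ₄ * C₂ * (n:ℝ) ^ (2*(q:ℝ) - α)
          + κ₄ * C₂ * (2:ℝ)^α * (n:ℝ) ^ (2*(q:ℝ) - α) * (1 - ρ)⁻¹) :=
          (ENNReal.ofReal_add (by positivity) (by positivity)).symm
    _ = ENNReal.ofReal (κ₄ * C₂ * (1 + (2:ℝ)^α * (1 - ρ)⁻¹) * (n:ℝ) ^ (2*(q:ℝ) - α)) := by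
          congr 1; ring
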